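/- If R is a {0,1}-valued random variable with P(R=1 | X^m, X^o, A) = P(R=1 | X^o, A) a.s., then for any integrable real-valued function ψ of (X^o, X^m), the random variable R·ψ(X^o,X^m) + (1−R)·E[ψ(X^o,X^m) | X^o, A] has the same expectation as ψ(X^o,X^m). -/

import Mathlib

open MeasureTheory ProbabilityTheory

/-- **Unbiasedness of the expected estimating function under MAR.** If `R` is a
`{0,1}`-valued random variable with `P(R=1 | Xᵐ, Xᵒ, A) = P(R=1 | Xᵒ, A)` a.s., then
for any measurable `ψ` with `ψ(Xᵒ, Xᵐ)` integrable, the random variable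
`R·ψ(Xᵒ,Xᵐ) + (1−R)·E[ψ(Xᵒ,Xᵐ) | Xᵒ, A]` has the same expectation as `ψ(Xᵒ,Xᵐ)`. -/
theorem mar_expected_estimating_function_unbiased
    {Ω E F G : Type*} [m0 : MeasurableSpace Ω]
    [MeasurableSpace E] [MeasurableSpace F] [MeasurableSpace G]
    (μ : Measure Ω) [IsProbabilityMeasure μ]
    (Xm : Ω → E) (Xo : Ω → F) (A : Ω → G) (R : Ω → ℝ)
    (hXm : Measurable Xm) (hXo : Measurable Xo) (hA : Measurable A)
    (hR : Measurable R) (hR01 : ∀ ω, R ω = 0 ∨ R ω = 1)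
    (mFull mObs : MeasurableSpace Ω)
    (hmFull : mFull = MeasurableSpace.comap (fun ω => (Xm ω, Xo ω, A ω)) inferInstance)
    (hmObs : mObs = MeasurableSpace.comap (fun ω => (Xo ω, A ω)) inferInstance)
    (hFull_le : mFull ≤ m0) (hObs_le : mObs ≤ m0)
    -- MAR: P(R=1 | Xᵐ, Xᵒ, A) = P(R=1 | Xᵒ, A) a.s.
    (hMAR : μ[Set.indicator {ω | R ω = 1} (fun _ => (1 : ℝ)) | mFull]
      =ᵐ[μ] μ[Set.indicator {ω | R ω = 1} (fun _ => (1 : ℝ)) | mObs])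
    (ψ : F × E → ℝ) (hψ : Measurable ψ)
    (hint : Integrable (fun ω => ψ (Xo ω, Xm ω)) μ) :
    ∫ ω, (R ω * ψ (Xo ω, Xm ω)
        + (1 - R ω) * (μ[fun ω' => ψ (Xo ω', Xm ω') | mObs]) ω) ∂μ
      = ∫ ω, ψ (Xo ω, Xm ω) ∂μ := by

  classical
  set g : Ω → ℝ := fun ω => ψ (Xo ω, Xm ω) with hg_def
  set h : Ω → ℝ := μ[fun ω' => ψ (Xo ω', Xm ω') | mObs] with hh_def
  -- R equals the indicator of {R = 1}
  have hReq : Set.indicator {ω | R ω = 1} (fun _ => (1 : ℝ)) = R := by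
    funext ω
    rcases hR01 ω with h0 | h1
    · simp [h0]
    · simp [h1]
  rw [hReq] at hMAR
  -- basic bounds and integrability
  have hRbd : ∀ ω, ‖R ω‖ ≤ 1 := by
    intro ω; rcases hR01 ω with h0 | h1
    · simp [h0]
    · simp [h1]
  have hR_int : Integrable R μ :=
    Integrable.mono' (integrable_const (1 : ℝ)) hR.aestronglyMeasurable
      (Filter.Eventually.of_forall hRbd)
  have hg_int : Integrable g μ := hint
  have hh_int : Integrable h μ := integrable_condExp
  have hgR_int : Integrable (fun ω => g ω * R ω) μ := by
    have := hint.bdd_mul hR.aestronglyMeasurable (Filter.Eventually.of_forall hRbd)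
    exact this.congr (Filter.Eventually.of_forall fun ω => mul_comm _ _)
  have hhR_int : Integrable (fun ω => h ω * R ω) μ := by
    have := hh_int.bdd_mul hR.aestronglyMeasurable (Filter.Eventually.of_forall hRbd)
    exact this.congr (Filter.Eventually.of_forall fun ω => mul_comm _ _)
  -- g is strongly measurable w.r.t. mFull
  have hfull_meas : Measurable[mFull] fun ω => (Xm ω, Xo ω, A ω) := by
    rw [hmFull]; exact measurable_iff_comap_le.mpr le_rfl
  have hg_sm : StronglyMeasurable[mFull] g := by
    have hpair : Measurable[mFull] fun ω => (Xo ω, Xm ω) :=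
      (measurable_snd.fst.prodMk measurable_fst).comp hfull_meas
    exact (hψ.comp hpair).stronglyMeasurable
  -- conditional expectations are strongly measurable
  have hc_sm : StronglyMeasurable[mObs] (μ[R|mObs]) := stronglyMeasurable_condExp
  have hh_sm : StronglyMeasurable[mObs] h := stronglyMeasurable_condExp
  -- a.e. bound on μ[R|mObs]
  have hc_bd : ∀ᵐ ω ∂μ, ‖(μ[R|mObs]) ω‖ ≤ (1 : ℝ) := by
    have hb : ∀ᵐ ω ∂μ, |R ω| ≤ ((1 : NNReal) : ℝ) :=
      Filter.Eventually.of_forall fun ω => by simpa using hRbd ω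
    filter_upwards [ae_bdd_condExp_of_ae_bdd (m := mObs) hb] with ω hω
    simpa using hω
  have hgc_int : Integrable (fun ω => (μ[R|mObs]) ω * g ω) μ :=
    hint.bdd_mul (stronglyMeasurable_condExp.mono hObs_le).aestronglyMeasurable hc_bd
  -- key step: ∫ g·R = ∫ h·R
  have key : ∫ ω, g ω * R ω ∂μ = ∫ ω, h ω * R ω ∂μ := by
    have e1 : μ[fun ω => g ω * R ω | mFull] =ᵐ[μ] fun ω => g ω * (μ[R|mFull]) ω :=
      condExp_mul_of_stronglyMeasurable_left hg_sm hgR_int hR_int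
    have e2 : μ[fun ω => (μ[R|mObs]) ω * g ω | mObs]
        =ᵐ[μ] fun ω => (μ[R|mObs]) ω * h ω :=
      condExp_mul_of_stronglyMeasurable_left hc_sm hgc_int hg_int
    have e3 : μ[fun ω => h ω * R ω | mObs] =ᵐ[μ] fun ω => h ω * (μ[R|mObs]) ω :=
      condExp_mul_of_stronglyMeasurable_left hh_sm hhR_int hR_int
    calc ∫ ω, g ω * R ω ∂μ
        = ∫ ω, (μ[fun ω => g ω * R ω | mFull]) ω ∂μ :=
          (integral_condExp hFull_le).symm
      _ = ∫ ω, g ω * (μ[R|mFull]) ω ∂μ := integral_congr_ae e1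
      _ = ∫ ω, (μ[R|mObs]) ω * g ω ∂μ := by
          refine integral_congr_ae ?_
          filter_upwards [hMAR] with ω hω
          rw [hω, mul_comm]
      _ = ∫ ω, (μ[fun ω => (μ[R|mObs]) ω * g ω | mObs]) ω ∂μ :=
          (integral_condExp hObs_le).symm
      _ = ∫ ω, (μ[R|mObs]) ω * h ω ∂μ := integral_congr_ae e2
      _ = ∫ ω, (μ[fun ω => h ω * R ω | mObs]) ω ∂μ := by
          refine (integral_congr_ae ?_).symm
          filter_upwards [e3] with ω hω
          rw [hω, mul_comm]
      _ = ∫ ω, h ω * R ω ∂μ := integral_condExp hObs_le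
  -- put everything together
  have hsplit : (fun ω => R ω * g ω + (1 - R ω) * h ω)
      = fun ω => (g ω * R ω - h ω * R ω) + h ω := by
    funext ω; ring
  have hint1 : Integrable (fun ω => g ω * R ω - h ω * R ω) μ := hgR_int.sub hhR_int
  calc ∫ ω, (R ω * g ω + (1 - R ω) * h ω) ∂μ
      = ∫ ω, ((g ω * R ω - h ω * R ω) + h ω) ∂μ := by rw [hsplit]
    _ = (∫ ω, (g ω * R ω - h ω * R ω) ∂μ) + ∫ ω, h ω ∂μ :=
        integral_add hint1 hh_int
    _ = ((∫ ω, g ω * R ω ∂μ) - ∫ ω, h ω * R ω ∂μ) + ∫ ω, h ω ∂μ := by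
        rw [integral_sub hgR_int hhR_int]
    _ = ∫ ω, h ω ∂μ := by rw [key]; ring
    _ = ∫ ω, g ω ∂μ := integral_condExp hObs_le
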